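/- Let E be a finite-dimensional real inner product space, ι a finite index type, and (e_i)_{i∈ι} an orthonormal basis of E. Let π : E → E be twice continuously differentiable at a point x ∈ E (ContDiffAt ℝ 2 π x), and set P := Dπ(x) (the Fréchet derivative of π at x). Assume P is idempotent (P ∘ P = P) and self-adjoint (⟪Pu, v⟫ = ⟪u, Pv⟫ for all u, v ∈ E). Define σ_i : E → E by σ_i(y) := Dπ(y)(e_i). Then: (a) for all u ∈ E, Σ_{i∈ι} ⟪σ_i(x), u⟫ • σ_i(x) = P(u) (equivalently, Σ_i ⟪σ_i(x),u⟫⟪σ_i(x),v⟫ = ⟪Pu, v⟫ for all u, v); and (b) Σ_{i∈ι} [ (Dσ_i)(x)(σ_i(x)) − (D(Dπ))(x)(σ_i(x))(σ_i(x)) ] = 0, where D(Dπ)(x) := fderiv ℝ (fderiv ℝ π) x. -/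

import Mathlib

open scoped RealInnerProductSpace

/-- Extrinsic form of Lemma `lem:propSigmai` of the paper: if `π : E → E` is `C²` at `x`
with derivative `P = Dπ(x)` a self-adjoint idempotent, and `σ_i(y) := Dπ(y)(e_i)` for an
orthonormal basis `(e_i)`, then (a) `∑_i ⟪σ_i(x), ·⟫ σ_i(x) = P`, and
(b) `∑_i [Dσ_i(x)(σ_i(x)) − D²π(x)(σ_i(x), σ_i(x))] = 0`. -/
theorem stmt9 {E : Type*} [NormedAddCommGroup E] [InnerProductSpace ℝ E]
    [FiniteDimensional ℝ E]
    {ι : Type*} [Fintype ι] (e : OrthonormalBasis ι ℝ E)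
    (π : E → E) (x : E) (hπ : ContDiffAt ℝ 2 π x)
    (P : E →L[ℝ] E) (hP : P = fderiv ℝ π x)
    (hidem : ∀ u : E, P (P u) = P u)
    (hsym : ∀ u v : E, ⟪P u, v⟫ = ⟪u, P v⟫)
    (σ : ι → E → E) (hσ : ∀ i y, σ i y = fderiv ℝ π y (e i)) :
    (∀ u : E, ∑ i, ⟪σ i x, u⟫ • σ i x = P u) ∧
    (∑ i, (fderiv ℝ (σ i) x (σ i x)
        - fderiv ℝ (fderiv ℝ π) x (σ i x) (σ i x)) = 0) := by
  have hσx : ∀ i, σ i x = P (e i) := fun i => by rw [hσ, hP]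
  -- key lemma: for any continuous bilinear B, ∑ i, B (P e_i) (e i) = ∑ j, B (e j) (P (e j))
  have key : ∀ B : E →L[ℝ] E →L[ℝ] E,
      ∑ i, B (P (e i)) (e i) = ∑ j, B (e j) (P (e j)) := by
    intro B
    calc ∑ i, B (P (e i)) (e i)
        = ∑ i, B (∑ j, ⟪e j, P (e i)⟫ • e j) (e i) := by
          simp_rw [e.sum_repr']
      _ = ∑ i, ∑ j, ⟪e j, P (e i)⟫ • B (e j) (e i) := by
          simp [map_sum, ContinuousLinearMap.sum_apply]
      _ = ∑ j, ∑ i, ⟪P (e j), e i⟫ • B (e j) (e i) := by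
          rw [Finset.sum_comm]
          congr 1; ext j; congr 1; ext i
          rw [← hsym, real_inner_comm]
      _ = ∑ j, B (e j) (∑ i, ⟪e i, P (e j)⟫ • e i) := by
          congr 1; ext j
          rw [map_sum]
          congr 1; ext i
          rw [map_smul, real_inner_comm]
      _ = ∑ j, B (e j) (P (e j)) := by simp_rw [e.sum_repr']
  constructor
  · intro u
    calc ∑ i, ⟪σ i x, u⟫ • σ i x = ∑ i, ⟪e i, P u⟫ • P (e i) := by
          simp_rw [hσx]
          congr 1; ext i
          rw [hsym]
      _ = P (∑ i, ⟪e i, P u⟫ • e i) := by rw [map_sum]; simp_rw [map_smul]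
      _ = P (P u) := by rw [e.sum_repr']
      _ = P u := hidem u
  · set B := fderiv ℝ (fderiv ℝ π) x with hB
    have hd : DifferentiableAt ℝ (fderiv ℝ π) x :=
      (hπ.fderiv_right (m := 1) (by norm_num)).differentiableAt one_ne_zero
    have hfd : ∀ i, fderiv ℝ (σ i) x = (ContinuousLinearMap.apply ℝ E (e i)).comp B := by
      intro i
      have : σ i = fun y => fderiv ℝ π y (e i) := funext fun y => hσ i y
      rw [this]
      exact (((ContinuousLinearMap.apply ℝ E (e i)).hasFDerivAt).comp x hd.hasFDerivAt).fderiv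
    have h1 : ∑ i, fderiv ℝ (σ i) x (σ i x) = ∑ i, B (P (e i)) (e i) := by
      congr 1; ext i; rw [hfd, hσx]; rfl
    have h2 : ∑ i, fderiv ℝ (fderiv ℝ π) x (σ i x) (σ i x)
        = ∑ i, B (P (e i)) (P (e i)) := by
      simp_rw [hσx]; rfl
    have h3 : ∑ i, B (P (e i)) (P (e i)) = ∑ j, B (e j) (P (e j)) := by
      have := key (B.comp P)
      simp only [ContinuousLinearMap.comp_apply, hidem] at this
      rw [← this]
      exact key B
    rw [Finset.sum_sub_distrib, h1, h2, key B, h3, sub_self]
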